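/- arXiv:2302.06152 — 2 statements merged into one kernel-verified Lean document; each statement's English description precedes it below -/
import Mathlib

section
/- For every r ≥ 1 and all vectors a, b in ℝ^d, one has ⟨|a|^{r-1} a − |b|^{r-1} b, a − b⟩ ≥ (1/2) |a|^{r-1} |a − b|^2 + (1/2) |b|^{r-1} |a − b|^2, where ⟨·,·⟩ is the Euclidean inner product and |·| the Euclidean norm. -/
theorem damping_monotonicity (d : ℕ) (r : ℝ) (hr : 1 ≤ r)
    (a b : EuclideanSpace ℝ (Fin d)) :
    (inner ℝ (‖a‖ ^ (r - 1) • a - ‖b‖ ^ (r - 1) • b) (a - b) : ℝ) ≥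
      (1 / 2) * ‖a‖ ^ (r - 1) * ‖a - b‖ ^ 2 + (1 / 2) * ‖b‖ ^ (r - 1) * ‖a - b‖ ^ 2 := by
  have h1 : 0 ≤ r - 1 := by linarith
  set α := ‖a‖ ^ (r - 1) with hα
  set β := ‖b‖ ^ (r - 1) with hβ
  have key : (0:ℝ) ≤ (α - β) * (‖a‖ ^ 2 - ‖b‖ ^ 2) := by
    rcases le_total ‖a‖ ‖b‖ with h | h
    · have hab : α ≤ β := Real.rpow_le_rpow (norm_nonneg a) h h1
      have h2 : ‖a‖ ^ 2 ≤ ‖b‖ ^ 2 := by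
        apply pow_le_pow_left₀ (norm_nonneg a) h
      nlinarith
    · have hab : β ≤ α := Real.rpow_le_rpow (norm_nonneg b) h h1
      have h2 : ‖b‖ ^ 2 ≤ ‖a‖ ^ 2 := by
        apply pow_le_pow_left₀ (norm_nonneg b) h
      nlinarith
  have expand : (inner ℝ (α • a - β • b) (a - b) : ℝ)
      = α * ‖a‖ ^ 2 - (α + β) * (inner ℝ a b : ℝ) + β * ‖b‖ ^ 2 := by
    rw [inner_sub_left, inner_sub_right, inner_sub_right, real_inner_smul_left,
      real_inner_smul_left, real_inner_smul_left, real_inner_smul_left,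
      real_inner_self_eq_norm_sq, real_inner_self_eq_norm_sq, real_inner_comm b a]
    ring
  have hns : ‖a - b‖ ^ 2 = ‖a‖ ^ 2 - 2 * (inner ℝ a b : ℝ) + ‖b‖ ^ 2 :=
    norm_sub_sq_real a b
  rw [ge_iff_le, expand, hns]
  nlinarith
end

section
/- For every r ≥ 1 and all vectors a, b in ℝ^d, one has ⟨|a|^{r-1} a − |b|^{r-1} b, a − b⟩ ≥ 2^{-r} |a − b|^{r+1}. -/
lemma damping_key (r A B C : ℝ) (hr : 1 ≤ r) (hA : 0 ≤ A) (hB : 0 ≤ B)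
    (hC : 0 ≤ C) (hCle : C ≤ A + B) :
    (2:ℝ)^(-r) * C^(r+1) ≤
      ((A^(r-1) - B^(r-1))*(A^2-B^2) + (A^(r-1)+B^(r-1))*C^2)/2 := by
  have hs : (0:ℝ) ≤ r - 1 := by linarith
  have h1 : 0 ≤ (A^(r-1) - B^(r-1))*(A^2-B^2) := by
    rcases le_total A B with h | h
    · have h1 : A^(r-1) ≤ B^(r-1) := Real.rpow_le_rpow hA h hs
      have h2 : A^2 ≤ B^2 := by nlinarith
      nlinarith [mul_nonneg (sub_nonneg.2 h1) (sub_nonneg.2 h2)]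
    · apply mul_nonneg
      · linarith [Real.rpow_le_rpow hB h hs]
      · nlinarith
  have h2 : C^(r-1) ≤ 2^(r-1) * (A^(r-1) + B^(r-1)) := by
    have hC' : C^(r-1) ≤ (A+B)^(r-1) := Real.rpow_le_rpow hC hCle hs
    have h2pos : (0:ℝ) ≤ (2:ℝ)^(r-1) := Real.rpow_nonneg (by norm_num) _
    rcases le_total A B with h | h
    · have hst : (A+B)^(r-1) ≤ (2*B)^(r-1) :=
        Real.rpow_le_rpow (by linarith) (by linarith) hs
      have h2B : (2*B)^(r-1) = 2^(r-1) * B^(r-1) := Real.mul_rpow (by norm_num) hB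
      have hA' : 0 ≤ A^(r-1) := Real.rpow_nonneg hA _
      nlinarith
    · have hst : (A+B)^(r-1) ≤ (2*A)^(r-1) :=
        Real.rpow_le_rpow (by linarith) (by linarith) hs
      have h2A : (2*A)^(r-1) = 2^(r-1) * A^(r-1) := Real.mul_rpow (by norm_num) hA
      have hB' : 0 ≤ B^(r-1) := Real.rpow_nonneg hB _
      nlinarith
  have hsplit : C^(r+1) = C^(r-1) * C^2 := by
    rcases eq_or_lt_of_le hC with h0 | h0
    · rw [← h0]
      rw [Real.zero_rpow (by linarith : r + 1 ≠ 0)]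
      simp
    · rw [show r + 1 = (r-1) + 2 by ring, Real.rpow_add h0, Real.rpow_two]
  have hpow : (2:ℝ)^(-r) * 2^(r-1) = 1/2 := by
    rw [← Real.rpow_add (by norm_num : (0:ℝ) < 2),
      show -r + (r-1) = -1 by ring, Real.rpow_neg_one]
    norm_num
  have h2r : (0:ℝ) ≤ (2:ℝ)^(-r) := Real.rpow_nonneg (by norm_num) _
  have hC2 : (0:ℝ) ≤ C^2 := sq_nonneg C
  have hCs : (0:ℝ) ≤ C^(r-1) := Real.rpow_nonneg hC _
  calc (2:ℝ)^(-r) * C^(r+1) = (2:ℝ)^(-r) * C^(r-1) * C^2 := by rw [hsplit]; ring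
    _ ≤ (2:ℝ)^(-r) * (2^(r-1) * (A^(r-1) + B^(r-1))) * C^2 := by
        apply mul_le_mul_of_nonneg_right _ hC2
        exact mul_le_mul_of_nonneg_left h2 h2r
    _ = (A^(r-1) + B^(r-1)) * C^2 / 2 := by
        rw [show (2:ℝ)^(-r) * (2^(r-1) * (A^(r-1) + B^(r-1))) =
          ((2:ℝ)^(-r) * 2^(r-1)) * (A^(r-1) + B^(r-1)) by ring, hpow]; ring
    _ ≤ ((A^(r-1) - B^(r-1))*(A^2-B^2) + (A^(r-1)+B^(r-1))*C^2)/2 := by linarith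

theorem damping_strong_monotonicity (d : ℕ) (r : ℝ) (hr : 1 ≤ r)
    (a b : EuclideanSpace ℝ (Fin d)) :
    (inner ℝ (‖a‖ ^ (r - 1) • a - ‖b‖ ^ (r - 1) • b) (a - b) : ℝ) ≥
      (2 : ℝ) ^ (-r) * ‖a - b‖ ^ (r + 1) := by
  set A := ‖a‖ with hA
  set B := ‖b‖ with hB
  set C := ‖a - b‖ with hC
  have hab : (inner ℝ a b : ℝ) = (A^2 + B^2 - C^2)/2 := by
    have h := norm_sub_sq_real a b
    rw [← hA, ← hB, ← hC] at h
    linarith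
  have expand : (inner ℝ (A ^ (r - 1) • a - B ^ (r - 1) • b) (a - b) : ℝ)
      = ((A^(r-1) - B^(r-1))*(A^2-B^2) + (A^(r-1)+B^(r-1))*C^2)/2 := by
    rw [inner_sub_left, inner_sub_right, inner_sub_right,
      real_inner_smul_left, real_inner_smul_left, real_inner_smul_left,
      real_inner_smul_left, real_inner_self_eq_norm_sq, real_inner_self_eq_norm_sq]
    have hba : (inner ℝ b a : ℝ) = (A^2 + B^2 - C^2)/2 := by
      rw [real_inner_comm]; exact hab
    rw [hab, hba]; ring
  rw [expand]
  exact damping_key r A B C hr (norm_nonneg a) (norm_nonneg b) (norm_nonneg _)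
    (norm_sub_le a b)
end
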